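/- Let A be a commutative noetherian ring and let C be a semi-dualizing module for A. Then there is an isomorphism of (A ⋉ C)-modules Hom_A(A ⋉ C, C) ≅ A ⋉ C, and Ext^i_A(A ⋉ C, C) = 0 for all i ≥ 1. -/

import Mathlib

open TrivSqZeroExt

/-- `Ext^i_R(M, N)` for modules `M`, `N` over a commutative ring `R`. -/
noncomputable abbrev ExtGroup (R : Type) [CommRing R] (i : ℕ)
    (M : Type) [AddCommGroup M] [Module R M] (N : Type) [AddCommGroup N] [Module R N] : Type :=
  ((Ext R (ModuleCat R) i).obj (Opposite.op (ModuleCat.of R M))).obj (ModuleCat.of R N)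

section
variable (A : Type) [CommRing A] (C : Type) [AddCommGroup C] [Module A C]

/-- Over a commutative ring every module is canonically a module over the opposite ring;
this provides the data needed for Mathlib's `TrivSqZeroExt A C` to be a commutative ring. -/
noncomputable instance : Module Aᵐᵒᵖ C :=
  Module.compHom C ((RingHom.id A).fromOpposite Commute.all)

instance : IsCentralScalar A C := ⟨fun _ _ => rfl⟩

/-- `C` is a semi-dualizing module for `A`: it is finitely generated, the canonical map
`A → Hom_A(C,C)`, `a ↦ (a • ·)`, is bijective, and `Ext^i_A(C,C) = 0` for `i ≥ 1`. -/
def IsSemidualizing : Prop :=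
  Module.Finite A C ∧ Function.Bijective (LinearMap.lsmul A C) ∧
    ∀ i : ℕ, 1 ≤ i → Subsingleton (ExtGroup A i C C)

/-- The `(A ⋉ C)`-module structure on `Hom_A(A ⋉ C, I)` coming from the `(A ⋉ C)`-action on
the first argument, `(r • f) x = f (r * x)`. -/
noncomputable instance homModule (I : Type) [AddCommGroup I] [Module A I] :
    Module (TrivSqZeroExt A C) (TrivSqZeroExt A C →ₗ[A] I) where
  smul r f := f ∘ₗ LinearMap.mulLeft A r
  one_smul f := by ext x; simp [HSMul.hSMul, SMul.smul]
  mul_smul r s f := by ext x; simp [HSMul.hSMul, SMul.smul, mul_assoc, mul_left_comm]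
  smul_zero r := by ext x; simp [HSMul.hSMul, SMul.smul]
  smul_add r f g := by ext x; simp [HSMul.hSMul, SMul.smul]
  add_smul r s f := by ext x; simp [HSMul.hSMul, SMul.smul, add_mul]
  zero_smul f := by ext x; simp [HSMul.hSMul, SMul.smul]

/-- An `A`-module viewed as an `(A ⋉ C)`-module via the projection `A ⋉ C → A`. -/
noncomputable def moduleOfFst (M : Type) [AddCommGroup M] [Module A M] :
    Module (TrivSqZeroExt A C) M :=
  Module.compHom M (fstHom A A C).toRingHom

end

section AuxAdditive

open CategoryTheory CategoryTheory.Limits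

noncomputable instance Functor.mapHomotopyCategory_additive
    {ι V W : Type*} [Category V] [Category W] [Preadditive V] [Preadditive W]
    (F : V ⥤ W) [F.Additive] (c : ComplexShape ι) : (F.mapHomotopyCategory c).Additive where
  map_add {X Y f g} := by
    obtain ⟨f, rfl⟩ := (HomotopyCategory.quotient V c).map_surjective f
    obtain ⟨g, rfl⟩ := (HomotopyCategory.quotient V c).map_surjective g
    erw [← Functor.map_add, Functor.mapHomotopyCategory_map, Functor.mapHomotopyCategory_map,
      Functor.mapHomotopyCategory_map, ← Functor.map_add, ← Functor.map_add]
    rfl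

noncomputable instance projectiveResolutions_additive
    {C : Type*} [Category C] [Abelian C] [EnoughProjectives C] :
    (projectiveResolutions C).Additive where
  map_add {X Y f g} := by
    dsimp [projectiveResolutions]
    erw [← Functor.map_add]
    apply HomotopyCategory.eq_of_homotopy
    apply ProjectiveResolution.liftHomotopy (f + g) <;> simp

noncomputable instance Functor.leftDerived_additive {C D : Type*} [Category C] [Category D]
    [Abelian C] [Abelian D] [EnoughProjectives C]
    (F : C ⥤ D) [F.Additive] (n : ℕ) : (F.leftDerived n).Additive := by
  unfold Functor.leftDerived Functor.leftDerivedToHomotopyCategory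
  infer_instance

end AuxAdditive

section AuxParts

open CategoryTheory CategoryTheory.Limits Opposite

variable (A : Type) [CommRing A] (C : Type) [AddCommGroup C] [Module A C]

lemma homModule_smul_apply (I : Type) [AddCommGroup I] [Module A I]
    (r : TrivSqZeroExt A C) (f : TrivSqZeroExt A C →ₗ[A] I) (x : TrivSqZeroExt A C) :
    (r • f) x = f (r * x) := rfl

lemma part_one (hbij : Function.Bijective (LinearMap.lsmul A C)) :
    Nonempty ((TrivSqZeroExt A C →ₗ[A] C) ≃ₗ[TrivSqZeroExt A C] TrivSqZeroExt A C) := by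
  let φ : TrivSqZeroExt A C →ₗ[TrivSqZeroExt A C] (TrivSqZeroExt A C →ₗ[A] C) :=
    LinearMap.toSpanSingleton (TrivSqZeroExt A C) _ (sndHom A C)
  have hφ : ∀ (r x : TrivSqZeroExt A C), φ r x = snd (r * x) := fun r x => rfl
  have hinj : Function.Injective φ := by
    refine (injective_iff_map_eq_zero φ).mpr ?_
    intro r h
    have h1 : snd r = 0 := by
      have := LinearMap.congr_fun h 1
      rw [hφ, mul_one] at this
      simpa using this
    have h2 : fst r = 0 := by
      refine hbij.1 ?_
      ext c
      have := LinearMap.congr_fun h (inr c)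
      rw [hφ] at this
      simp only [snd_mul, fst_inr, snd_inr, MulOpposite.op_zero, zero_smul, add_zero] at this
      simpa using this
    exact TrivSqZeroExt.ext h2 h1
  have hsurj : Function.Surjective φ := by
    intro f
    obtain ⟨a, ha⟩ := hbij.2 (f ∘ₗ inrHom A C)
    refine ⟨inl a + inr (f 1), ?_⟩
    ext x
    rw [hφ]
    have hx : (inl (fst x) : TrivSqZeroExt A C) + inr (snd x) = x := inl_fst_add_inr_snd_eq x
    have hfa : ∀ c : C, a • c = f (inr c) := fun c => LinearMap.congr_fun ha c
    have hone : (inl (fst x) : TrivSqZeroExt A C) = fst x • 1 := by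
      refine TrivSqZeroExt.ext ?_ ?_ <;> simp
    calc snd ((inl a + inr (f 1)) * x)
        = a • snd x + fst x • f 1 := by
          simp [add_mul, snd_mul, op_smul_eq_smul]
      _ = f x := by
          conv_rhs => rw [← hx, map_add, ← hfa, hone, map_smul]
          exact add_comm _ _
  exact ⟨(LinearEquiv.ofBijective φ ⟨hinj, hsurj⟩).symm⟩

lemma part_two (hext : ∀ i : ℕ, 1 ≤ i → Subsingleton (ExtGroup A i C C)) :
    ∀ i : ℕ, 1 ≤ i → Subsingleton (ExtGroup A i (TrivSqZeroExt A C) C) := by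
  intro i hi
  obtain ⟨j, rfl⟩ : ∃ j, i = j + 1 := ⟨i - 1, (Nat.succ_pred_eq_of_pos hi).symm⟩
  let Y := ModuleCat.of A C
  let G : (ModuleCat A)ᵒᵖ ⥤ ModuleCat A :=
    (((linearYoneda A (ModuleCat A)).obj Y).rightOp.leftDerived (j + 1)).leftOp
  haveI : G.Additive := inferInstance
  let Mo := ModuleCat.of A (TrivSqZeroExt A C)
  let XA := ModuleCat.of A A
  let π1 : Mo ⟶ XA := ModuleCat.ofHom (fstHom A A C).toLinearMap
  let ι1 : XA ⟶ Mo := ModuleCat.ofHom (Algebra.linearMap A (TrivSqZeroExt A C))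
  let π2 : Mo ⟶ Y := ModuleCat.ofHom (sndHom A C)
  let ι2 : Y ⟶ Mo := ModuleCat.ofHom (inrHom A C)
  have hdec : π1 ≫ ι1 + π2 ≫ ι2 = 𝟙 Mo := by
    ext x : 2
    show algebraMap A (TrivSqZeroExt A C) (fst x) + inr (snd x) = x
    rw [algebraMap_eq_inl']
    simpa using inl_fst_add_inr_snd_eq x
  have hA : CategoryTheory.Limits.IsZero (G.obj (op XA)) := by
    haveI : Projective XA := ModuleCat.projective_of_free (Module.Basis.singleton PUnit.{1} A)
    exact isZero_Ext_succ_of_projective XA Y j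
  have hCz : CategoryTheory.Limits.IsZero (G.obj (op Y)) := by
    haveI hs : Subsingleton (G.obj (op Y) : Type) := hext (j + 1) (by omega)
    exact ModuleCat.isZero_of_subsingleton _
  have hzero : CategoryTheory.Limits.IsZero (G.obj (op Mo)) := by
    rw [CategoryTheory.Limits.IsZero.iff_id_eq_zero]
    have h1 : 𝟙 (G.obj (op Mo)) = G.map ((𝟙 Mo).op) := (G.map_id _).symm
    rw [h1, ← hdec, op_add, G.map_add, op_comp, op_comp, G.map_comp, G.map_comp,
      hA.eq_of_tgt (G.map ι1.op) 0, hCz.eq_of_tgt (G.map ι2.op) 0]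
    simp
  have hid : 𝟙 (G.obj (op Mo)) = 0 :=
    (CategoryTheory.Limits.IsZero.iff_id_eq_zero _).mp hzero
  refine ⟨fun x y => ?_⟩
  have hz : ∀ z : (G.obj (op Mo)), z = 0 := by
    intro z
    calc z = (𝟙 (G.obj (op Mo)) : _ ⟶ _) z := rfl
      _ = (0 : G.obj (op Mo) ⟶ G.obj (op Mo)) z := by rw [hid]
      _ = 0 := rfl
  exact (hz x).trans (hz y).symm

end AuxParts

/-- If `A` is a commutative noetherian ring and `C` a semi-dualizing
`A`-module, then `Hom_A(A ⋉ C, C) ≅ A ⋉ C` as `(A ⋉ C)`-modules, and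
`Ext^i_A(A ⋉ C, C) = 0` for all `i ≥ 1`. -/
theorem hom_trivSqZeroExt_self_iso
    (A : Type) [CommRing A] [IsNoetherianRing A] (C : Type) [AddCommGroup C] [Module A C]
    (hC : IsSemidualizing A C) :
    Nonempty ((TrivSqZeroExt A C →ₗ[A] C) ≃ₗ[TrivSqZeroExt A C] TrivSqZeroExt A C) ∧
      ∀ i : ℕ, 1 ≤ i → Subsingleton (ExtGroup A i (TrivSqZeroExt A C) C) := by
  obtain ⟨hfin, hbij, hext⟩ := hC
  exact ⟨part_one A C hbij, part_two A C hext⟩
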